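/- Consider the problem (IP₁): minimize Σᵢ(δᵢyᵢ + eᵢxᵢ) + Σⱼ ζⱼzⱼ + c₀ over x, y ∈ ℝ^l, z ∈ ℝ^k subject to c₁ ≤ Σᵢ(αᵢyᵢ + bᵢxᵢ) + Σⱼ zⱼ ≤ c₂ and ½xᵢ² ≤ yᵢ for all i. Suppose: (i) (IP₁) has a feasible point; (ii) for each i ∈ {1,2}, it is NOT the case that A_s is positive semidefinite and there exists ω with b_s = A_sω and cᵢ = ½ωᵀA_sω; and (iii) A_s ≠ 0. Then the infimum of (IP₁) equals sup over ν₁ ≥ 0, ν₂ ≥ 0 of ν₁c₁ − ν₂c₂ + c₀ + Σᵢ hᵢ(ν₁,ν₂) + g(ν₁,ν₂) (as extended real numbers), where, writing s = ν₂ − ν₁: hᵢ(ν₁,ν₂) = −(sbᵢ + eᵢ)²/(2(sαᵢ + δᵢ)) if sαᵢ + δᵢ > 0, hᵢ(ν₁,ν₂) = 0 if sαᵢ + δᵢ = 0 and eᵢ + sbᵢ = 0, and hᵢ(ν₁,ν₂) = −∞ otherwise; and g(ν₁,ν₂) = 0 if ζⱼ + s = 0 for all j = 1,…,k, and g(ν₁,ν₂)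 = −∞ otherwise. -/

import Mathlib

open scoped Classical
open Matrix

/-- The objective `f(x,u,w) = Σᵢ(½δᵢxᵢ² + eᵢxᵢ) + Σⱼ(ζⱼuⱼwⱼ + ½wⱼ² + ηⱼwⱼ)` of problem (P₁). -/
noncomputable def quadObj {l k : ℕ} (δ e : Fin l → ℝ) (ζ η : Fin k → ℝ)
    (x : Fin l → ℝ) (u w : Fin k → ℝ) : ℝ :=
  (∑ i, ((1/2) * δ i * x i ^ 2 + e i * x i)) +
    ∑ j, (ζ j * u j * w j + (1/2) * w j ^ 2 + η j * w j)

/-- The constraint function `h̄(x,u,w) = Σᵢ(½αᵢxᵢ² + bᵢxᵢ) + Σⱼ uⱼwⱼ` (no constant term). -/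
noncomputable def quadConBar {l k : ℕ} (α b : Fin l → ℝ)
    (x : Fin l → ℝ) (u w : Fin k → ℝ) : ℝ :=
  (∑ i, ((1/2) * α i * x i ^ 2 + b i * x i)) + ∑ j, u j * w j

/-- The SOCP objective `Σᵢ(δᵢyᵢ + eᵢxᵢ) + Σⱼ ζⱼzⱼ + c₀` of the reformulation. -/
noncomputable def socpObj {l k : ℕ} (δ e : Fin l → ℝ) (ζ : Fin k → ℝ) (c₀ : ℝ)
    (x y : Fin l → ℝ) (z : Fin k → ℝ) : ℝ :=
  (∑ i, (δ i * y i + e i * x i)) + (∑ j, ζ j * z j) + c₀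

/-- The linear part `Σᵢ(αᵢyᵢ + bᵢxᵢ) + Σⱼ zⱼ` of the SOCP constraint. -/
noncomputable def socpConLhs {l k : ℕ} (α b : Fin l → ℝ)
    (x y : Fin l → ℝ) (z : Fin k → ℝ) : ℝ :=
  (∑ i, (α i * y i + b i * x i)) + ∑ j, z j

/-- The `(l+2k) × (l+2k)` real symmetric matrix
`A_s = blockDiag(α₁, …, α_l, E₂, …, E₂)` with `k` copies of `E₂ = [[0,1],[1,0]]`. -/
noncomputable def Asmat (l k : ℕ) (α : Fin l → ℝ) :
    Matrix (Fin (l + 2 * k)) (Fin (l + 2 * k)) ℝ :=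
  fun i j =>
    if hi : (i : ℕ) < l then (if i = j then α ⟨(i : ℕ), hi⟩ else 0)
    else if _hj : (j : ℕ) < l then 0
    else if ((i : ℕ) - l) / 2 = ((j : ℕ) - l) / 2 ∧ ((i : ℕ) - l) % 2 ≠ ((j : ℕ) - l) % 2
      then 1 else 0

/-- The vector `b_s = (b₁, …, b_l, 0, …, 0) ∈ ℝ^{l+2k}`. -/
noncomputable def bsvec (l k : ℕ) (b : Fin l → ℝ) : Fin (l + 2 * k) → ℝ :=
  fun i => if hi : (i : ℕ) < l then b ⟨(i : ℕ), hi⟩ else 0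

/-- The degenerate case excluded by Assumption 3.2 of Jiang–Li–Wu: `A_s ⪰ 0`,
`b_s ∈ Range(A_s)` and `c' = ½ωᵀA_sω` for `ω` with `b_s = A_sω`. -/
def DegenerateCase (l k : ℕ) (α b : Fin l → ℝ) (c' : ℝ) : Prop :=
  (Asmat l k α).PosSemidef ∧ ∃ ω : Fin (l + 2 * k) → ℝ,
    bsvec l k b = (Asmat l k α).mulVec ω ∧ c' = (1/2) * (ω ⬝ᵥ (Asmat l k α).mulVec ω)

/-- The optimal value (in the extended reals) of the interval-constrained SOCP problem (IP₁). -/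
noncomputable def socpValInt {l k : ℕ} (δ e α b : Fin l → ℝ) (ζ : Fin k → ℝ)
    (c₀ c₁ c₂ : ℝ) : EReal :=
  sInf {v : EReal | ∃ (x y : Fin l → ℝ) (z : Fin k → ℝ),
    c₁ ≤ socpConLhs α b x y z ∧ socpConLhs α b x y z ≤ c₂ ∧ (∀ i, (1/2) * x i ^ 2 ≤ y i) ∧
    v = (socpObj δ e ζ c₀ x y z : EReal)}

/-- The dual term `hᵢ(ν₁,ν₂)` (written in terms of `s = ν₂ − ν₁`) of Theorem 3.6 of
Jiang–Li–Wu, with values in `ℝ ∪ {−∞}`. -/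
noncomputable def hDual (αi δi bi ei s : ℝ) : EReal :=
  if 0 < s * αi + δi then ((-(s * bi + ei) ^ 2 / (2 * (s * αi + δi)) : ℝ) : EReal)
  else if s * αi + δi = 0 ∧ ei + s * bi = 0 then (0 : EReal)
  else ⊥

/-- The dual term `g(ν₁,ν₂)` (written in terms of `s = ν₂ − ν₁`) of Theorem 3.6 of
Jiang–Li–Wu, with values in `ℝ ∪ {−∞}`. -/
noncomputable def gDual {k : ℕ} (ζ : Fin k → ℝ) (s : ℝ) : EReal :=
  if ∀ j, ζ j + s = 0 then (0 : EReal) else ⊥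


section StrongDualityAux

/-! ### Auxiliary lemmas for the strong duality proof -/

private lemma ecoe_sum {ι : Type*} (s : Finset ι) (f : ι → ℝ) :
    ((∑ i ∈ s, f i : ℝ) : EReal) = ∑ i ∈ s, ((f i : ℝ) : EReal) := by
  induction s using Finset.cons_induction with
  | empty => simp
  | cons a s ha ih => rw [Finset.sum_cons, Finset.sum_cons, EReal.coe_add, ih]

private lemma quad_lb {A B x y : ℝ} (hA : 0 < A) (hxy : (1/2)*x^2 ≤ y) :
    -B^2/(2*A) ≤ A*y + B*x := by
  rw [div_le_iff₀ (by positivity : (0:ℝ) < 2*A)]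
  nlinarith [sq_nonneg (A*x+B), mul_pos hA hA,
    mul_le_mul_of_nonneg_left hxy (le_of_lt (mul_pos hA hA))]

private lemma hDual_le (αi δi bi ei s x y : ℝ) (hxy : (1/2)*x^2 ≤ y) :
    hDual αi δi bi ei s ≤ (((s*αi+δi)*y + (s*bi+ei)*x : ℝ) : EReal) := by
  unfold hDual
  split_ifs with h1 h2
  · exact EReal.coe_le_coe_iff.2 (quad_lb h1 hxy)
  · have hB : s*bi+ei = 0 := by linarith [h2.2]
    rw [h2.1, hB]
    norm_num
  · exact bot_le

private lemma hDual_le_zero (αi δi bi ei s : ℝ) : hDual αi δi bi ei s ≤ (0:EReal) := by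
  unfold hDual
  split_ifs with h1 h2
  · have : -(s*bi+ei)^2/(2*(s*αi+δi)) ≤ 0 :=
      div_nonpos_of_nonpos_of_nonneg (neg_nonpos.mpr (sq_nonneg _)) (by linarith)
    exact_mod_cast this
  · exact le_refl _
  · exact bot_le

private lemma hDual_ne_bot (αi δi bi ei s : ℝ) (h : hDual αi δi bi ei s ≠ ⊥) :
    ∃ v x y : ℝ, hDual αi δi bi ei s = (v:EReal) ∧ (1/2)*x^2 ≤ y ∧
      (s*αi+δi)*y + (s*bi+ei)*x = v := by
  unfold hDual at *
  split_ifs at h with h1 h2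
  · have hA : s*αi+δi ≠ 0 := ne_of_gt h1
    refine ⟨-(s*bi+ei)^2/(2*(s*αi+δi)), -(s*bi+ei)/(s*αi+δi),
      (1/2)*(-(s*bi+ei)/(s*αi+δi))^2, ?_, le_refl _, ?_⟩
    · simp only [if_pos h1]
    · field_simp
      ring
  · refine ⟨0, 0, 0, ?_, by norm_num, ?_⟩
    · rw [if_neg (by rw [h2.1]; norm_num : ¬ 0 < s*αi+δi), if_pos h2]
      exact EReal.coe_zero.symm
    · have hB : s*bi+ei = 0 := by linarith [h2.2]
      rw [h2.1, hB]; ring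
  · exact absurd rfl h

private lemma hDual_wit (αi δi bi ei s c' : ℝ) (hlt : hDual αi δi bi ei s < (c' : EReal)) :
    ∃ x y : ℝ, (1/2)*x^2 ≤ y ∧ (s*αi+δi)*y + (s*bi+ei)*x < c' := by
  by_cases hb : hDual αi δi bi ei s = ⊥
  · -- unbounded below case
    unfold hDual at hb
    split_ifs at hb with h1 h2
    · exact absurd hb (EReal.coe_ne_bot _)
    · exact absurd hb (by norm_num)
    · push_neg at h1 h2
      rcases lt_or_eq_of_le h1 with hA | hA
      · -- A < 0 : take x = 0, y large
        set A := s*αi+δi with hAdef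
        have hApos : (0:ℝ) < -A := by linarith
        have hAne : A ≠ 0 := by linarith
        have hyn : (0:ℝ) ≤ |c'|/(-A) := div_nonneg (abs_nonneg _) hApos.le
        refine ⟨0, |c'|/(-A) + 1, by nlinarith, ?_⟩
        have hkey : A * (|c'|/(-A) + 1) = -|c'| + A := by
          field_simp
        rw [mul_zero, add_zero, hkey]
        have := abs_nonneg c'
        have := neg_abs_le c'
        linarith
      · -- A = 0, B ≠ 0
        have hB : s*bi+ei ≠ 0 := by
          intro hB0
          exact (h2 hA) (by linarith)
        refine ⟨-(|c'|+1)/(s*bi+ei), (1/2)*(-(|c'|+1)/(s*bi+ei))^2, le_refl _, ?_⟩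
        rw [hA]
        have : (s*bi+ei) * (-(|c'|+1)/(s*bi+ei)) = -(|c'|+1) := by field_simp
        rw [zero_mul, zero_add, this]
        have := abs_nonneg c'
        have := neg_abs_le c'
        linarith
  · obtain ⟨v, x, y, hv, hxy, hval⟩ := hDual_ne_bot αi δi bi ei s hb
    refine ⟨x, y, hxy, ?_⟩
    rw [hval]
    rw [hv] at hlt
    exact_mod_cast hlt

private lemma gDual_le_zero {k : ℕ} (ζ : Fin k → ℝ) (s : ℝ) : gDual ζ s ≤ (0:EReal) := by
  unfold gDual; split_ifs <;> simp

private lemma gDual_le {k : ℕ} (ζ : Fin k → ℝ) (s : ℝ) (z : Fin k → ℝ) :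
    gDual ζ s ≤ ((∑ j, (ζ j + s) * z j : ℝ) : EReal) := by
  unfold gDual
  split_ifs with h
  · have : ∑ j, (ζ j + s) * z j = 0 := by
      apply Finset.sum_eq_zero
      intro j _
      rw [h j, zero_mul]
    rw [this]
    norm_num
  · exact bot_le

private lemma gDual_ne_bot {k : ℕ} (ζ : Fin k → ℝ) (s : ℝ) (h : gDual ζ s ≠ ⊥) :
    gDual ζ s = (0:EReal) ∧ ∀ j, ζ j + s = 0 := by
  unfold gDual at *
  split_ifs at * with hc
  · exact ⟨rfl, hc⟩
  · exact absurd rfl h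

private lemma gDual_wit {k : ℕ} (ζ : Fin k → ℝ) (s c' : ℝ) (hlt : gDual ζ s < (c' : EReal)) :
    ∃ z : Fin k → ℝ, ∑ j, (ζ j + s) * z j < c' := by
  unfold gDual at hlt
  split_ifs at hlt with h
  · refine ⟨0, ?_⟩
    have h0 : ∑ j, (ζ j + s) * (0:ℝ) = 0 := by simp
    simp only [Pi.zero_apply] at h0 ⊢
    rw [h0]
    exact_mod_cast hlt
  · push_neg at h
    obtain ⟨j₀, hj₀⟩ := h
    refine ⟨fun j => if j = j₀ then -(|c'|+1)/(ζ j₀ + s) else 0, ?_⟩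
    have : ∑ j, (ζ j + s) * (if j = j₀ then -(|c'|+1)/(ζ j₀ + s) else 0)
        = (ζ j₀ + s) * (-(|c'|+1)/(ζ j₀ + s)) := by
      rw [Finset.sum_eq_single j₀]
      · simp
      · intro j _ hj; simp [hj]
      · intro hj; exact absurd (Finset.mem_univ j₀) hj
    rw [this]
    have heq : (ζ j₀ + s) * (-(|c'|+1)/(ζ j₀ + s)) = -(|c'|+1) := by field_simp
    rw [heq]
    have := abs_nonneg c'
    have := neg_abs_le c'
    linarith

end StrongDualityAux

section StrongDualityAux2

private lemma sum_split (l : ℕ) (δ e α b x y : Fin l → ℝ) (s : ℝ) :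
    ∑ i, ((s * α i + δ i) * y i + (s * b i + e i) * x i)
      = (∑ i, (δ i * y i + e i * x i)) + s * ∑ i, (α i * y i + b i * x i) := by
  rw [Finset.mul_sum, ← Finset.sum_add_distrib]
  exact Finset.sum_congr rfl (fun i _ => by ring)

private lemma zsum_split (k : ℕ) (ζ z : Fin k → ℝ) (s : ℝ) :
    ∑ j, (ζ j + s) * z j = (∑ j, ζ j * z j) + s * ∑ j, z j := by
  rw [Finset.mul_sum, ← Finset.sum_add_distrib]
  exact Finset.sum_congr rfl (fun j _ => by ring)

private lemma sumb {l k : ℕ} (δ e α b : Fin l → ℝ) (ζ : Fin k → ℝ) (s R : ℝ)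
    (HP : ∀ (x y : Fin l → ℝ) (z : Fin k → ℝ), (∀ i, (1/2) * x i ^ 2 ≤ y i) →
      R ≤ (∑ i, ((s * α i + δ i) * y i + (s * b i + e i) * x i)) + ∑ j, (ζ j + s) * z j) :
    (R : EReal) ≤ (∑ i, hDual (α i) (δ i) (b i) (e i) s) + gDual ζ s := by
  -- choose, for every coordinate, a point with value < 1
  have hx1 : ∀ i : Fin l, ∃ p : ℝ × ℝ, (1/2) * p.1 ^ 2 ≤ p.2 ∧
      (s * α i + δ i) * p.2 + (s * b i + e i) * p.1 < 1 := by
    intro i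
    obtain ⟨x, y, h1, h2⟩ := hDual_wit (α i) (δ i) (b i) (e i) s 1
      (lt_of_le_of_lt (hDual_le_zero _ _ _ _ _) (by norm_num))
    exact ⟨(x, y), h1, h2⟩
  choose P hP1 hP2 using hx1
  -- Step 1: gDual is not ⊥
  have hgnb : gDual ζ s ≠ ⊥ := by
    intro hgb
    set W := ∑ i, ((s * α i + δ i) * (P i).2 + (s * b i + e i) * (P i).1) with hW
    obtain ⟨z, hz⟩ := gDual_wit ζ s (R - W - 1) (by rw [hgb]; exact EReal.bot_lt_coe _)
    have := HP (fun i => (P i).1) (fun i => (P i).2) z (fun i => hP1 i)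
    rw [← hW] at this
    linarith
  -- Step 2: no hDual coordinate is ⊥
  have hhnb : ∀ i, hDual (α i) (δ i) (b i) (e i) s ≠ ⊥ := by
    intro i₀ hib
    obtain ⟨hg0, hgz⟩ := gDual_ne_bot ζ s hgnb
    obtain ⟨xx, yy, hf0, hv0⟩ := hDual_wit (α i₀) (δ i₀) (b i₀) (e i₀) s (R - l - 1)
      (by rw [hib]; exact EReal.bot_lt_coe _)
    set X := Function.update (fun i => (P i).1) i₀ xx with hX
    set Y := Function.update (fun i => (P i).2) i₀ yy with hY
    have hfeas : ∀ i, (1/2) * X i ^ 2 ≤ Y i := by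
      intro i
      by_cases hi : i = i₀
      · subst hi; rw [hX, hY]; simp only [Function.update_self]; exact hf0
      · rw [hX, hY]; simp only [Function.update_of_ne hi]; exact hP1 i
    have hsum := HP X Y 0 hfeas
    have hz0 : ∑ j, (ζ j + s) * (0 : Fin k → ℝ) j = 0 := by simp
    rw [hz0, add_zero] at hsum
    have hdecomp : ∑ i, ((s * α i + δ i) * Y i + (s * b i + e i) * X i)
        = ((s * α i₀ + δ i₀) * yy + (s * b i₀ + e i₀) * xx)
          + ∑ i ∈ Finset.univ.erase i₀, ((s * α i + δ i) * (P i).2 + (s * b i + e i) * (P i).1) := by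
      rw [← Finset.add_sum_erase _ _ (Finset.mem_univ i₀)]
      congr 1
      · rw [hX, hY]; simp only [Function.update_self]
      · apply Finset.sum_congr rfl
        intro i hi
        have hne : i ≠ i₀ := (Finset.mem_erase.1 hi).1
        rw [hX, hY]; simp only [Function.update_of_ne hne]
    have hbound : ∑ i ∈ Finset.univ.erase i₀, ((s * α i + δ i) * (P i).2 + (s * b i + e i) * (P i).1)
        ≤ (l : ℝ) := by
      calc ∑ i ∈ Finset.univ.erase i₀, ((s * α i + δ i) * (P i).2 + (s * b i + e i) * (P i).1)
          ≤ ∑ _i ∈ Finset.univ.erase i₀, (1:ℝ) :=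
            Finset.sum_le_sum (fun i _ => (hP2 i).le)
        _ = ((Finset.univ.erase i₀).card : ℝ) := by rw [Finset.sum_const, nsmul_eq_mul, mul_one]
        _ ≤ (l : ℝ) := by
            have h1 : (Finset.univ.erase i₀).card ≤ (Finset.univ : Finset (Fin l)).card :=
              Finset.card_le_card (Finset.erase_subset _ _)
            have h2 : (Finset.univ : Finset (Fin l)).card = l := Finset.card_fin l
            exact_mod_cast h2 ▸ h1
    rw [hdecomp] at hsum
    linarith
  -- Step 3: all coordinates attain real values
  have hatt : ∀ i : Fin l, ∃ q : ℝ × (ℝ × ℝ), hDual (α i) (δ i) (b i) (e i) s = (q.1 : EReal) ∧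
      (1/2) * q.2.1 ^ 2 ≤ q.2.2 ∧ (s * α i + δ i) * q.2.2 + (s * b i + e i) * q.2.1 = q.1 := by
    intro i
    obtain ⟨v, x, y, h1, h2, h3⟩ := hDual_ne_bot (α i) (δ i) (b i) (e i) s (hhnb i)
    exact ⟨(v, (x, y)), h1, h2, h3⟩
  choose Q hQ1 hQ2 hQ3 using hatt
  obtain ⟨hg0, hgz⟩ := gDual_ne_bot ζ s hgnb
  have hsum := HP (fun i => (Q i).2.1) (fun i => (Q i).2.2) 0 (fun i => hQ2 i)
  have hz0 : ∑ j, (ζ j + s) * (0 : Fin k → ℝ) j = 0 := by simp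
  rw [hz0, add_zero] at hsum
  have hveq : ∑ i, ((s * α i + δ i) * (Q i).2.2 + (s * b i + e i) * (Q i).2.1)
      = ∑ i, (Q i).1 := Finset.sum_congr rfl (fun i _ => hQ3 i)
  rw [hveq] at hsum
  have hrhs : (∑ i, hDual (α i) (δ i) (b i) (e i) s) + gDual ζ s
      = ((∑ i, (Q i).1 : ℝ) : EReal) := by
    rw [hg0, add_zero, ecoe_sum]
    exact Finset.sum_congr rfl (fun i _ => hQ1 i)
  rw [hrhs]
  exact_mod_cast hsum

private lemma slater_aux {E : Type*} (CC : E → Prop) (F G : E → ℝ)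
    (hconv : ∀ w w' (a b : ℝ), CC w → CC w' → 0 ≤ a → 0 ≤ b → a + b = 1 →
      ∃ w'', CC w'' ∧ F w'' = a * F w + b * F w' ∧ G w'' = a * G w + b * G w')
    (c r' : ℝ)
    (hfeq : ∀ w, CC w → G w = c → r' ≤ F w)
    (hsl : ∃ w, CC w ∧ G w < c)
    (hbad : ∃ w, CC w ∧ c < G w ∧ F w < r') :
    ∃ s : ℝ, 0 ≤ s ∧ ∀ w, CC w → r' + s * c ≤ F w + s * G w := by
  obtain ⟨w₀, hw₀C, hw₀G, hw₀F⟩ := hbad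
  have chord : ∀ w, CC w → G w < c → ∀ w', CC w' → c < G w' →
      (r' - F w) * (G w' - c) ≤ (F w' - r') * (c - G w) := by
    intro w hw hG w' hw' hG'
    have hD : 0 < G w' - G w := by linarith
    set a := (G w' - c)/(G w' - G w) with ha
    set b := (c - G w)/(G w' - G w) with hb
    have hab : a + b = 1 := by rw [ha, hb]; field_simp; ring
    obtain ⟨w'', hC'', hF'', hG''⟩ := hconv w w' a b hw hw'
      (div_nonneg (by linarith) hD.le) (div_nonneg (by linarith) hD.le) hab
    have haD : a * (G w' - G w) = G w' - c := by rw [ha]; field_simp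
    have hbD : b * (G w' - G w) = c - G w := by rw [hb]; field_simp
    have hGc : G w'' = c := by
      rw [hG'']
      have : a * G w + b * G w' = c := by
        have h1 : (a * G w + b * G w') * (G w' - G w) = c * (G w' - G w) := by
          have : (a * G w + b * G w') * (G w' - G w)
              = (a * (G w' - G w)) * G w + (b * (G w' - G w)) * G w' := by ring
          rw [this, haD, hbD]; ring
        have := mul_right_cancel₀ (ne_of_gt hD) h1
        exact this
      exact this
    have hge := hfeq w'' hC'' hGc
    rw [hF''] at hge
    have e1 : a * r' + b * r' = r' := by rw [← add_mul, hab, one_mul]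
    have expand : 0 ≤ a * (F w - r') + b * (F w' - r') := by nlinarith [hge, e1]
    have key : 0 ≤ (a * (F w - r') + b * (F w' - r')) * (G w' - G w) :=
      mul_nonneg expand hD.le
    have heq2 : (a * (F w - r') + b * (F w' - r')) * (G w' - G w)
        = (G w' - c) * (F w - r') + (c - G w) * (F w' - r') := by
      have h1 : (a * (F w - r') + b * (F w' - r')) * (G w' - G w)
          = (a * (G w' - G w)) * (F w - r') + (b * (G w' - G w)) * (F w' - r') := by ring
      rw [h1, haD, hbD]
    rw [heq2] at key
    linarith
  set T := {q : ℝ | ∃ w, CC w ∧ G w < c ∧ q = (r' - F w)/(c - G w)} with hT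
  have hTne : T.Nonempty := by
    obtain ⟨w₁, h1, h2⟩ := hsl
    exact ⟨_, w₁, h1, h2, rfl⟩
  have hub : ∀ q ∈ T, q ≤ (F w₀ - r')/(G w₀ - c) := by
    rintro q ⟨w, hw, hG, rfl⟩
    rw [div_le_div_iff₀ (by linarith) (by linarith)]
    exact chord w hw hG w₀ hw₀C hw₀G
  have hbdd : BddAbove T := ⟨_, hub⟩
  set σ := sSup T with hσ
  have hσub : σ ≤ (F w₀ - r')/(G w₀ - c) := csSup_le hTne hub
  have hσneg : σ < 0 :=
    lt_of_le_of_lt hσub (div_neg_of_neg_of_pos (by linarith) (by linarith))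
  refine ⟨-σ, by linarith, ?_⟩
  intro w hw
  rcases lt_trichotomy (G w) c with hlt | heq | hgt
  · have hmem : (r' - F w)/(c - G w) ∈ T := ⟨w, hw, hlt, rfl⟩
    have h := le_csSup hbdd hmem
    rw [div_le_iff₀ (by linarith : (0:ℝ) < c - G w)] at h
    nlinarith [h]
  · have := hfeq w hw heq
    rw [heq]
    linarith
  · have hle : σ ≤ (F w - r')/(G w - c) := by
      apply csSup_le hTne
      rintro q ⟨w', hw', hG', rfl⟩
      rw [div_le_div_iff₀ (by linarith) (by linarith)]
      exact chord w' hw' hG' w hw hgt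
    rw [le_div_iff₀ (by linarith : (0:ℝ) < G w - c)] at hle
    nlinarith [hle]

end StrongDualityAux2

section StrongDualityAux3

private lemma weak_dual_pt {l k : ℕ} (δ e α b : Fin l → ℝ) (ζ : Fin k → ℝ) (c₀ c₁ c₂ : ℝ)
    (ν₁ ν₂ : ℝ) (h1 : 0 ≤ ν₁) (h2 : 0 ≤ ν₂) (x y : Fin l → ℝ) (z : Fin k → ℝ)
    (hg1 : c₁ ≤ socpConLhs α b x y z) (hg2 : socpConLhs α b x y z ≤ c₂)
    (hfe : ∀ i, (1/2) * x i ^ 2 ≤ y i) :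
    ((ν₁ * c₁ - ν₂ * c₂ + c₀ : ℝ) : EReal) +
        (∑ i, hDual (α i) (δ i) (b i) (e i) (ν₂ - ν₁)) + gDual ζ (ν₂ - ν₁)
      ≤ ((socpObj δ e ζ c₀ x y z : ℝ) : EReal) := by
  have hh : (∑ i, hDual (α i) (δ i) (b i) (e i) (ν₂ - ν₁))
      ≤ ((∑ i, (((ν₂ - ν₁) * α i + δ i) * y i + ((ν₂ - ν₁) * b i + e i) * x i) : ℝ) : EReal) := by
    rw [ecoe_sum]
    exact Finset.sum_le_sum (fun i _ => hDual_le _ _ _ _ _ _ _ (hfe i))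
  have hgg : gDual ζ (ν₂ - ν₁) ≤ ((∑ j, (ζ j + (ν₂ - ν₁)) * z j : ℝ) : EReal) :=
    gDual_le ζ (ν₂ - ν₁) z
  calc (((ν₁ * c₁ - ν₂ * c₂ + c₀ : ℝ) : EReal) +
        ∑ i, hDual (α i) (δ i) (b i) (e i) (ν₂ - ν₁)) + gDual ζ (ν₂ - ν₁)
      ≤ (((ν₁ * c₁ - ν₂ * c₂ + c₀ : ℝ) : EReal) +
          ((∑ i, (((ν₂ - ν₁) * α i + δ i) * y i + ((ν₂ - ν₁) * b i + e i) * x i) : ℝ) : EReal)) +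
          ((∑ j, (ζ j + (ν₂ - ν₁)) * z j : ℝ) : EReal) :=
        add_le_add (add_le_add (le_refl _) hh) hgg
    _ = ((ν₁ * c₁ - ν₂ * c₂ + c₀ +
          (∑ i, (((ν₂ - ν₁) * α i + δ i) * y i + ((ν₂ - ν₁) * b i + e i) * x i)) +
          ∑ j, (ζ j + (ν₂ - ν₁)) * z j : ℝ) : EReal) := by
        norm_cast
    _ ≤ ((socpObj δ e ζ c₀ x y z : ℝ) : EReal) := by
        apply EReal.coe_le_coe_iff.2
        rw [sum_split, zsum_split]
        simp only [socpConLhs] at hg1 hg2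
        have k1 : 0 ≤ ν₁ * (((∑ i, (α i * y i + b i * x i)) + ∑ j, z j) - c₁) :=
          mul_nonneg h1 (sub_nonneg.mpr hg1)
        have k2 : 0 ≤ ν₂ * (c₂ - ((∑ i, (α i * y i + b i * x i)) + ∑ j, z j)) :=
          mul_nonneg h2 (sub_nonneg.mpr hg2)
        simp only [socpObj]
        nlinarith [k1, k2]

private lemma finpos {l k : ℕ} (δ e α b : Fin l → ℝ) (ζ : Fin k → ℝ) (c₀ c₁ c₂ : ℝ)
    (s R : ℝ) (hs : 0 ≤ s)
    (HP : ∀ (x y : Fin l → ℝ) (z : Fin k → ℝ), (∀ i, (1/2) * x i ^ 2 ≤ y i) →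
      R + s * c₂ ≤ (∑ i, ((s * α i + δ i) * y i + (s * b i + e i) * x i)) + ∑ j, (ζ j + s) * z j) :
    ((R + c₀ : ℝ) : EReal) ≤ sSup {v : EReal | ∃ ν₁ ν₂ : ℝ, 0 ≤ ν₁ ∧ 0 ≤ ν₂ ∧
        v = ((ν₁ * c₁ - ν₂ * c₂ + c₀ : ℝ) : EReal) +
          (∑ i, hDual (α i) (δ i) (b i) (e i) (ν₂ - ν₁)) + gDual ζ (ν₂ - ν₁)} := by
  have hmem : (((0 * c₁ - s * c₂ + c₀ : ℝ) : EReal) +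
      (∑ i, hDual (α i) (δ i) (b i) (e i) (s - 0)) + gDual ζ (s - 0)) ∈
      {v : EReal | ∃ ν₁ ν₂ : ℝ, 0 ≤ ν₁ ∧ 0 ≤ ν₂ ∧
        v = ((ν₁ * c₁ - ν₂ * c₂ + c₀ : ℝ) : EReal) +
          (∑ i, hDual (α i) (δ i) (b i) (e i) (ν₂ - ν₁)) + gDual ζ (ν₂ - ν₁)} :=
    ⟨0, s, le_refl 0, hs, rfl⟩
  refine le_trans ?_ (le_sSup hmem)
  rw [sub_zero]
  have hS := sumb δ e α b ζ s (R + s * c₂) HP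
  have hre : R + c₀ = (0 * c₁ - s * c₂ + c₀) + (R + s * c₂) := by ring
  calc ((R + c₀ : ℝ) : EReal)
      = ((0 * c₁ - s * c₂ + c₀ : ℝ) : EReal) + ((R + s * c₂ : ℝ) : EReal) := by
        rw [← EReal.coe_add, ← hre]
    _ ≤ ((0 * c₁ - s * c₂ + c₀ : ℝ) : EReal) +
          ((∑ i, hDual (α i) (δ i) (b i) (e i) s) + gDual ζ s) :=
        add_le_add (le_refl _) hS
    _ = (((0 * c₁ - s * c₂ + c₀ : ℝ) : EReal) +
          ∑ i, hDual (α i) (δ i) (b i) (e i) s) + gDual ζ s := (add_assoc _ _ _).symm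

private lemma finneg {l k : ℕ} (δ e α b : Fin l → ℝ) (ζ : Fin k → ℝ) (c₀ c₁ c₂ : ℝ)
    (s R : ℝ) (hs : s ≤ 0)
    (HP : ∀ (x y : Fin l → ℝ) (z : Fin k → ℝ), (∀ i, (1/2) * x i ^ 2 ≤ y i) →
      R + s * c₁ ≤ (∑ i, ((s * α i + δ i) * y i + (s * b i + e i) * x i)) + ∑ j, (ζ j + s) * z j) :
    ((R + c₀ : ℝ) : EReal) ≤ sSup {v : EReal | ∃ ν₁ ν₂ : ℝ, 0 ≤ ν₁ ∧ 0 ≤ ν₂ ∧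
        v = ((ν₁ * c₁ - ν₂ * c₂ + c₀ : ℝ) : EReal) +
          (∑ i, hDual (α i) (δ i) (b i) (e i) (ν₂ - ν₁)) + gDual ζ (ν₂ - ν₁)} := by
  have hmem : ((((-s) * c₁ - 0 * c₂ + c₀ : ℝ) : EReal) +
      (∑ i, hDual (α i) (δ i) (b i) (e i) (0 - -s)) + gDual ζ (0 - -s)) ∈
      {v : EReal | ∃ ν₁ ν₂ : ℝ, 0 ≤ ν₁ ∧ 0 ≤ ν₂ ∧
        v = ((ν₁ * c₁ - ν₂ * c₂ + c₀ : ℝ) : EReal) +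
          (∑ i, hDual (α i) (δ i) (b i) (e i) (ν₂ - ν₁)) + gDual ζ (ν₂ - ν₁)} :=
    ⟨-s, 0, by linarith, le_refl 0, rfl⟩
  refine le_trans ?_ (le_sSup hmem)
  rw [show (0 : ℝ) - -s = s from by ring]
  have hS := sumb δ e α b ζ s (R + s * c₁) HP
  have hre : R + c₀ = ((-s) * c₁ - 0 * c₂ + c₀) + (R + s * c₁) := by ring
  calc ((R + c₀ : ℝ) : EReal)
      = (((-s) * c₁ - 0 * c₂ + c₀ : ℝ) : EReal) + ((R + s * c₁ : ℝ) : EReal) := by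
        rw [← EReal.coe_add, ← hre]
    _ ≤ (((-s) * c₁ - 0 * c₂ + c₀ : ℝ) : EReal) +
          ((∑ i, hDual (α i) (δ i) (b i) (e i) s) + gDual ζ s) :=
        add_le_add (le_refl _) hS
    _ = ((((-s) * c₁ - 0 * c₂ + c₀ : ℝ) : EReal) +
          ∑ i, hDual (α i) (δ i) (b i) (e i) s) + gDual ζ s := (add_assoc _ _ _).symm

end StrongDualityAux3

section StrongDualityAux4

set_option maxHeartbeats 1000000 in
private lemma bdry {l : ℕ} (δ e α b : Fin l → ℝ) (c r' : ℝ)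
    (hG : ∀ x y : Fin l → ℝ, (∀ i, (1/2) * x i ^ 2 ≤ y i) →
      c ≤ ∑ i, (α i * y i + b i * x i))
    (hfe : ∃ x y : Fin l → ℝ, (∀ i, (1/2) * x i ^ 2 ≤ y i) ∧
      (∑ i, (α i * y i + b i * x i)) ≤ c)
    (hr : ∀ x y : Fin l → ℝ, (∀ i, (1/2) * x i ^ 2 ≤ y i) →
      (∑ i, (α i * y i + b i * x i)) ≤ c → r' < ∑ i, (δ i * y i + e i * x i)) :
    ∃ s : ℝ, 0 ≤ s ∧ ∀ x y : Fin l → ℝ, (∀ i, (1/2) * x i ^ 2 ≤ y i) →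
      r' + s * c ≤ ∑ i, ((s * α i + δ i) * y i + (s * b i + e i) * x i) := by
  -- helper: single-coordinate test points
  have hsingle : ∀ (i : Fin l) (X Y : ℝ),
      ∑ i', (α i' * (Function.update (0 : Fin l → ℝ) i Y) i'
        + b i' * (Function.update (0 : Fin l → ℝ) i X) i') = α i * Y + b i * X := by
    intro i X Y
    rw [Finset.sum_eq_single i]
    · simp
    · intro j _ hj
      simp [Function.update_of_ne hj]
    · intro h; exact absurd (Finset.mem_univ i) h
  have hupdfeas : ∀ (i : Fin l) (X Y : ℝ), (1/2) * X ^ 2 ≤ Y →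
      ∀ i', (1/2) * (Function.update (0 : Fin l → ℝ) i X) i' ^ 2
        ≤ (Function.update (0 : Fin l → ℝ) i Y) i' := by
    intro i X Y hXY i'
    by_cases hi : i' = i
    · subst hi; simp only [Function.update_self]; exact hXY
    · simp only [Function.update_of_ne hi, Pi.zero_apply]; norm_num
  -- α is nonnegative
  have hα : ∀ i, 0 ≤ α i := by
    intro i
    by_contra h
    push_neg at h
    set Y := max 0 ((c-1)/α i) with hY
    have hfeas := hupdfeas i 0 Y (by simp [hY, le_max_left])
    have hc := hG _ _ hfeas
    rw [hsingle i 0 Y] at hc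
    have h1 : α i * Y ≤ α i * ((c-1)/α i) :=
      mul_le_mul_of_nonpos_left (le_max_right _ _) h.le
    have h2 : α i * ((c-1)/α i) = c - 1 := by
      rw [mul_comm]; exact div_mul_cancel₀ _ (ne_of_lt h)
    nlinarith [hc, h1, h2]
  -- b vanishes where α does
  have hb0 : ∀ i, α i = 0 → b i = 0 := by
    intro i hαi
    by_contra h
    have hfeas := hupdfeas i ((c-1)/b i) ((1/2) * ((c-1)/b i)^2) (le_refl _)
    have hc := hG _ _ hfeas
    rw [hsingle i ((c-1)/b i) ((1/2) * ((c-1)/b i)^2), hαi] at hc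
    have h2 : b i * ((c-1)/b i) = c - 1 := by
      rw [mul_comm]; exact div_mul_cancel₀ _ h
    nlinarith [hc, h2]
  -- the minimum of the constraint function
  set ρ : Fin l → ℝ := fun i => if 0 < α i then -(b i)^2/(2*α i) else 0 with hρ
  set xs : Fin l → ℝ := fun i => if 0 < α i then -(b i)/(α i) else 0 with hxs
  set ys : Fin l → ℝ := fun i => (1/2) * (xs i)^2 with hys
  have hsfeas : ∀ i, (1/2) * xs i ^ 2 ≤ ys i := fun i => le_refl _
  have hterm : ∀ i, α i * ys i + b i * xs i = ρ i := by
    intro i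
    by_cases hi : 0 < α i
    · have hne : α i ≠ 0 := ne_of_gt hi
      simp only [hρ, hys, hxs, if_pos hi]
      field_simp
      ring
    · have hz : α i = 0 := le_antisymm (not_lt.1 hi) (hα i)
      simp only [hρ, hys, hxs, if_neg hi, hz, hb0 i hz]
      ring
  have hsG : ∑ i, (α i * ys i + b i * xs i) = ∑ i, ρ i :=
    Finset.sum_congr rfl (fun i _ => hterm i)
  have hρc₁ : c ≤ ∑ i, ρ i := by
    have := hG xs ys hsfeas
    rwa [hsG] at this
  have hρc₂ : ∑ i, ρ i ≤ c := by
    obtain ⟨xf, yf, hff, hfc⟩ := hfe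
    refine le_trans (Finset.sum_le_sum (fun i _ => ?_)) hfc
    by_cases hi : 0 < α i
    · simp only [hρ, if_pos hi]
      exact quad_lb hi (hff i)
    · have hz : α i = 0 := le_antisymm (not_lt.1 hi) (hα i)
      simp only [hρ, if_neg hi, hz, hb0 i hz]
      norm_num
  -- per-coordinate minima for the α = 0 coordinates
  have hH : ∀ i : Fin l, ∃ q : ℝ × ℝ × ℝ, ((1/2) * q.2.1 ^ 2 ≤ q.2.2) ∧
      δ i * q.2.2 + e i * q.2.1 = q.1 ∧
      (¬ 0 < α i → ∀ X' Y' : ℝ, (1/2) * X' ^ 2 ≤ Y' → q.1 ≤ δ i * Y' + e i * X') := by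
    intro i
    by_cases hi : 0 < α i
    · exact ⟨(0, 0, 0), by norm_num, by ring, fun h => absurd hi h⟩
    · have hz : α i = 0 := le_antisymm (not_lt.1 hi) (hα i)
      have hnb : hDual 0 (δ i) 0 (e i) 0 ≠ ⊥ := by
        intro hbot
        obtain ⟨X, Y, hXY, hval⟩ := hDual_wit 0 (δ i) 0 (e i) 0
          (r' - (∑ j, (δ j * ys j + e j * xs j)) + (δ i * ys i + e i * xs i) - 1)
          (by rw [hbot]; exact EReal.bot_lt_coe _)
        simp only [mul_zero, zero_mul, zero_add] at hval
        -- build the bad feasible point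
        set x' := Function.update xs i X with hx'
        set y' := Function.update ys i Y with hy'
        have hfeas' : ∀ i', (1/2) * x' i' ^ 2 ≤ y' i' := by
          intro i'
          by_cases hii : i' = i
          · subst hii; rw [hx', hy']; simp only [Function.update_self]; exact hXY
          · rw [hx', hy']; simp only [Function.update_of_ne hii]; exact hsfeas i'
        have hG' : ∑ i', (α i' * y' i' + b i' * x' i') = ∑ i', ρ i' := by
          rw [← hsG]
          apply Finset.sum_congr rfl
          intro j _
          by_cases hji : j = i
          · subst hji
            rw [hx', hy']
            simp only [Function.update_self, hz, hb0 j hz]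
            ring
          · rw [hx', hy']; simp only [Function.update_of_ne hji]
        have hF' : ∑ i', (δ i' * y' i' + e i' * x' i')
            = (∑ j, (δ j * ys j + e j * xs j)) - (δ i * ys i + e i * xs i)
              + (δ i * Y + e i * X) := by
          rw [← Finset.add_sum_erase _ _ (Finset.mem_univ i),
            ← Finset.add_sum_erase _ (fun j => δ j * ys j + e j * xs j) (Finset.mem_univ i)]
          have : ∑ j ∈ Finset.univ.erase i, (δ j * y' j + e j * x' j)
              = ∑ j ∈ Finset.univ.erase i, (δ j * ys j + e j * xs j) := by
            apply Finset.sum_congr rfl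
            intro j hj
            have hne : j ≠ i := (Finset.mem_erase.1 hj).1
            rw [hx', hy']; simp only [Function.update_of_ne hne]
          rw [this, hx', hy']
          simp only [Function.update_self]
          ring
        have hfeasible := hr x' y' hfeas' (by rw [hG']; exact hρc₂)
        rw [hF'] at hfeasible
        linarith
      obtain ⟨v, X, Y, hveq, hXY, hval⟩ := hDual_ne_bot 0 (δ i) 0 (e i) 0 hnb
      simp only [mul_zero, zero_mul, zero_add] at hval
      refine ⟨(v, X, Y), hXY, hval, fun _ X' Y' hX'Y' => ?_⟩
      have := hDual_le 0 (δ i) 0 (e i) 0 X' Y' hX'Y'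
      rw [hveq] at this
      simp only [mul_zero, zero_mul, zero_add] at this
      exact_mod_cast this
  choose Q hQfeas hQval hQmin using hH
  -- the attaining feasible point
  set xV : Fin l → ℝ := fun i => if 0 < α i then -(b i)/(α i) else (Q i).2.1 with hxV
  set yV : Fin l → ℝ := fun i => if 0 < α i then (1/2) * (-(b i)/(α i))^2 else (Q i).2.2 with hyV
  have hVfeas : ∀ i, (1/2) * xV i ^ 2 ≤ yV i := by
    intro i
    rw [hxV, hyV]
    by_cases hi : 0 < α i
    · simp only [if_pos hi]; exact le_refl _
    · simp only [if_neg hi]; exact hQfeas i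
  have hVG : ∑ i, (α i * yV i + b i * xV i) = ∑ i, ρ i := by
    apply Finset.sum_congr rfl
    intro i _
    by_cases hi : 0 < α i
    · have hne : α i ≠ 0 := ne_of_gt hi
      simp only [hxV, hyV, hρ, if_pos hi]
      field_simp
      ring
    · have hz : α i = 0 := le_antisymm (not_lt.1 hi) (hα i)
      simp only [hxV, hyV, hρ, if_neg hi, hz, hb0 i hz]
      ring
  set FV : Fin l → ℝ := fun i => δ i * yV i + e i * xV i with hFV
  have hVtot : r' < ∑ i, FV i := hr xV yV hVfeas (by rw [hVG]; exact hρc₂)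
  set ε : ℝ := (∑ i, FV i) - r' with hε
  have hεpos : 0 < ε := by rw [hε]; linarith
  -- choice of the multiplier s
  set K : Fin l → ℝ := fun i => (α i * e i - δ i * b i)^2/(2*(α i)^2) with hK
  have hKnn : ∀ i, 0 < α i → 0 ≤ K i := by
    intro i hi
    rw [hK]
    positivity
  set σ : Fin l → ℝ := fun i => if 0 < α i
    then max 0 ((max 1 ((l+1) * K i/ε) - δ i)/α i) else 0 with hσ
  set s : ℝ := ∑ i, σ i with hs
  have hσnn : ∀ i, 0 ≤ σ i := by
    intro i
    rw [hσ]
    by_cases hi : 0 < α i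
    · simp only [if_pos hi]; exact le_max_left _ _
    · simp only [if_neg hi]
      exact le_refl _
  have hs0 : 0 ≤ s := Finset.sum_nonneg (fun i _ => hσnn i)
  have hsge : ∀ i, σ i ≤ s := fun i =>
    Finset.single_le_sum (fun j _ => hσnn j) (Finset.mem_univ i)
  have hA : ∀ i, 0 < α i → max 1 ((l+1) * K i/ε) ≤ s * α i + δ i := by
    intro i hi
    have h1 : (max 1 ((l+1) * K i/ε) - δ i)/α i ≤ σ i := by
      rw [hσ]; simp only [if_pos hi]; exact le_max_right _ _
    have h2 : (max 1 ((l+1) * K i/ε) - δ i)/α i ≤ s := le_trans h1 (hsge i)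
    rw [div_le_iff₀ hi] at h2
    nlinarith [h2]
  have hApos : ∀ i, 0 < α i → 0 < s * α i + δ i := by
    intro i hi
    have := hA i hi
    have h1 : (1:ℝ) ≤ max 1 ((l+1) * K i/ε) := le_max_left _ _
    linarith
  have hKA : ∀ i, 0 < α i → K i / (s * α i + δ i) ≤ ε/(l+1) := by
    intro i hi
    have hAp := hApos i hi
    have h2 : (l+1) * K i/ε ≤ s * α i + δ i := le_trans (le_max_right _ _) (hA i hi)
    rw [div_le_iff₀ hεpos] at h2
    rw [div_le_div_iff₀ hAp (by positivity : (0:ℝ) < (l:ℝ)+1)]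
    nlinarith [h2]
  refine ⟨s, hs0, ?_⟩
  intro x y hfeas
  -- per-coordinate lower bound
  have hper : ∀ i, s * ρ i + FV i - (if 0 < α i then ε/(l+1) else 0)
      ≤ (s * α i + δ i) * y i + (s * b i + e i) * x i := by
    intro i
    by_cases hi : 0 < α i
    · have hAp := hApos i hi
      have hq := quad_lb (B := s * b i + e i) hAp (hfeas i)
      have hid : -(s * b i + e i)^2/(2*(s * α i + δ i))
          = s * ρ i + FV i - K i/(s * α i + δ i) := by
        simp only [hρ, hFV, hxV, hyV, hK, if_pos hi]
        have hα0 : α i ≠ 0 := ne_of_gt hi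
        have hA0 : s * α i + δ i ≠ 0 := ne_of_gt hAp
        field_simp
        ring
      have hKA' := hKA i hi
      simp only [if_pos hi]
      rw [hid] at hq
      linarith
    · have hz : α i = 0 := le_antisymm (not_lt.1 hi) (hα i)
      have hb := hb0 i hz
      have hmin := hQmin i hi (x i) (y i) (hfeas i)
      have hxVi : xV i = (Q i).2.1 := by simp only [hxV, if_neg hi]
      have hyVi : yV i = (Q i).2.2 := by simp only [hyV, if_neg hi]
      have hFVi : FV i = (Q i).1 := by
        simp only [hFV, hxVi, hyVi]
        exact hQval i
      simp only [if_neg hi, hFVi, hρ]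
      rw [hz, hb]
      nlinarith [hmin]
  have hsum := Finset.sum_le_sum (fun i (_ : i ∈ Finset.univ) => hper i)
  have hsplit : ∑ i, (s * ρ i + FV i - (if 0 < α i then ε/(l+1) else 0))
      = s * (∑ i, ρ i) + (∑ i, FV i) - ∑ i, (if 0 < α i then ε/(l+1) else 0) := by
    rw [Finset.mul_sum, ← Finset.sum_add_distrib, ← Finset.sum_sub_distrib]
  have hκ : ∑ i, (if 0 < α i then ε/(l+1) else 0) ≤ (l:ℝ) * (ε/(l+1)) := by
    calc ∑ i, (if 0 < α i then ε/(l+1) else 0) ≤ ∑ _i : Fin l, ε/(l+1) := by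
          apply Finset.sum_le_sum
          intro i _
          by_cases hi : 0 < α i
          · rw [if_pos hi]
          · rw [if_neg hi]; positivity
      _ = (l:ℝ) * (ε/(l+1)) := by
          rw [Finset.sum_const, nsmul_eq_mul, Finset.card_fin]
  have hlt : (l:ℝ) * (ε/(l+1)) < ε := by
    rw [mul_div_assoc']
    rw [div_lt_iff₀ (by positivity : (0:ℝ) < (l:ℝ)+1)]
    nlinarith [hεpos]
  have hsc : s * c ≤ s * (∑ i, ρ i) := mul_le_mul_of_nonneg_left hρc₁ hs0
  rw [hsplit] at hsum
  have : r' + s * c < s * (∑ i, ρ i) + (∑ i, FV i) - ∑ i, (if 0 < α i then ε/(l+1) else 0) := by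
    have h1 : ∑ i, (if 0 < α i then ε/(l+1) else 0) < ε := lt_of_le_of_lt hκ hlt
    rw [hε] at h1 ⊢
    linarith
  linarith

end StrongDualityAux4


set_option maxHeartbeats 1600000 in
/-- Theorem 3.6 of Jiang–Li–Wu: under Assumption 3.2, strong duality holds between the
interval-constrained SOCP problem (IP₁) and its two-variable Lagrangian dual (ID₁). -/
theorem stmt_18 (l k : ℕ) (δ e α b : Fin l → ℝ) (ζ : Fin k → ℝ) (c₀ c₁ c₂ : ℝ)
    (hc₁₂ : c₁ ≤ c₂)
    (hfeas : ∃ (x y : Fin l → ℝ) (z : Fin k → ℝ),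
      c₁ ≤ socpConLhs α b x y z ∧ socpConLhs α b x y z ≤ c₂ ∧ (∀ i, (1/2) * x i ^ 2 ≤ y i))
    (hnd₁ : ¬ DegenerateCase l k α b c₁) (hnd₂ : ¬ DegenerateCase l k α b c₂)
    (hAne : Asmat l k α ≠ 0) :
    socpValInt δ e α b ζ c₀ c₁ c₂ =
      sSup {v : EReal | ∃ ν₁ ν₂ : ℝ, 0 ≤ ν₁ ∧ 0 ≤ ν₂ ∧
        v = ((ν₁ * c₁ - ν₂ * c₂ + c₀ : ℝ) : EReal) +
          (∑ i, hDual (α i) (δ i) (b i) (e i) (ν₂ - ν₁)) + gDual ζ (ν₂ - ν₁)} := by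
  simp only [socpValInt]
  apply le_antisymm
  · -- strong duality direction
    by_contra hcon
    push_neg at hcon
    obtain ⟨r, hr1, hr2⟩ := EReal.exists_between_coe_real hcon
    -- every feasible point has objective value above r
    have hrF : ∀ x y : Fin l → ℝ, ∀ z : Fin k → ℝ, (∀ i, (1/2) * x i ^ 2 ≤ y i) →
        c₁ ≤ socpConLhs α b x y z → socpConLhs α b x y z ≤ c₂ →
        r - c₀ < (∑ i, (δ i * y i + e i * x i)) + ∑ j, ζ j * z j := by
      intro x y z hf h1 h2
      have hmem : ((socpObj δ e ζ c₀ x y z : ℝ) : EReal) ∈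
          {v : EReal | ∃ (x y : Fin l → ℝ) (z : Fin k → ℝ),
            c₁ ≤ socpConLhs α b x y z ∧ socpConLhs α b x y z ≤ c₂ ∧
            (∀ i, (1/2) * x i ^ 2 ≤ y i) ∧ v = (socpObj δ e ζ c₀ x y z : EReal)} :=
        ⟨x, y, z, h1, h2, hf, rfl⟩
      have hlt := lt_of_lt_of_le hr2 (sInf_le hmem)
      have hlt' := EReal.coe_lt_coe_iff.1 hlt
      simp only [socpObj] at hlt'
      linarith
    have hrr : r - c₀ + c₀ = r := by ring
    by_cases hSL : ∃ x y : Fin l → ℝ, ∃ z : Fin k → ℝ,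
        (∀ i, (1/2) * x i ^ 2 ≤ y i) ∧ socpConLhs α b x y z < c₂
    · by_cases hSR : ∃ x y : Fin l → ℝ, ∃ z : Fin k → ℝ,
          (∀ i, (1/2) * x i ^ 2 ≤ y i) ∧ c₁ < socpConLhs α b x y z
      · -- main (two-sided Slater) case
        by_cases hRH : ∀ x y : Fin l → ℝ, ∀ z : Fin k → ℝ, (∀ i, (1/2) * x i ^ 2 ≤ y i) →
            c₂ < socpConLhs α b x y z →
            r - c₀ ≤ (∑ i, (δ i * y i + e i * x i)) + ∑ j, ζ j * z j
        · by_cases hLH : ∀ x y : Fin l → ℝ, ∀ z : Fin k → ℝ, (∀ i, (1/2) * x i ^ 2 ≤ y i) →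
              socpConLhs α b x y z < c₁ →
              r - c₀ ≤ (∑ i, (δ i * y i + e i * x i)) + ∑ j, ζ j * z j
          · -- s = 0 works
            have HP : ∀ (x y : Fin l → ℝ) (z : Fin k → ℝ), (∀ i, (1/2) * x i ^ 2 ≤ y i) →
                (r - c₀) + (0:ℝ) * c₂ ≤ (∑ i, (((0:ℝ) * α i + δ i) * y i + ((0:ℝ) * b i + e i) * x i))
                  + ∑ j, (ζ j + (0:ℝ)) * z j := by
              intro x y z hf
              have he1 : (∑ i, (((0:ℝ) * α i + δ i) * y i + ((0:ℝ) * b i + e i) * x i))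
                  = ∑ i, (δ i * y i + e i * x i) :=
                Finset.sum_congr rfl (fun i _ => by ring)
              have he2 : (∑ j, (ζ j + (0:ℝ)) * z j) = ∑ j, ζ j * z j :=
                Finset.sum_congr rfl (fun j _ => by ring)
              rw [he1, he2]
              rcases lt_or_ge c₂ (socpConLhs α b x y z) with h | h
              · have := hRH x y z hf h
                linarith
              · rcases lt_or_ge (socpConLhs α b x y z) c₁ with h' | h'
                · have := hLH x y z hf h'
                  linarith
                · have := hrF x y z hf h' h
                  linarith
            have := finpos δ e α b ζ c₀ c₁ c₂ 0 (r - c₀) (le_refl 0) HP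
            rw [hrr] at this
            exact absurd this (not_le.2 hr1)
          · -- left failure: use a negative multiplier via slater_aux on -G
            push_neg at hLH
            obtain ⟨xm, ym, zm, hfm, hgm, hFm⟩ := hLH
            obtain ⟨s, hs0, hHP⟩ := slater_aux
              (fun w : (Fin l → ℝ) × (Fin l → ℝ) × (Fin k → ℝ) =>
                ∀ i, (1/2) * w.1 i ^ 2 ≤ w.2.1 i)
              (fun w => (∑ i, (δ i * w.2.1 i + e i * w.1 i)) + ∑ j, ζ j * w.2.2 j)
              (fun w => -(socpConLhs α b w.1 w.2.1 w.2.2))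
              (by
                intro w w' a a' hw hw' ha ha' hab
                refine ⟨(fun i => a * w.1 i + a' * w'.1 i,
                  fun i => a * w.2.1 i + a' * w'.2.1 i,
                  fun j => a * w.2.2 j + a' * w'.2.2 j), ?_, ?_, ?_⟩
                · intro i
                  have h1 := hw i
                  have h2 := hw' i
                  have h3 : a' = 1 - a := by linarith
                  subst h3
                  nlinarith [mul_le_mul_of_nonneg_left h1 ha,
                    mul_le_mul_of_nonneg_left h2 ha',
                    mul_nonneg (mul_nonneg ha ha') (sq_nonneg (w.1 i - w'.1 i))]
                · have e1 : ∑ i, (δ i * (a * w.2.1 i + a' * w'.2.1 i)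
                      + e i * (a * w.1 i + a' * w'.1 i))
                      = a * (∑ i, (δ i * w.2.1 i + e i * w.1 i))
                        + a' * (∑ i, (δ i * w'.2.1 i + e i * w'.1 i)) := by
                    rw [Finset.mul_sum, Finset.mul_sum, ← Finset.sum_add_distrib]
                    exact Finset.sum_congr rfl (fun i _ => by ring)
                  have e2 : ∑ j, ζ j * (a * w.2.2 j + a' * w'.2.2 j)
                      = a * (∑ j, ζ j * w.2.2 j) + a' * (∑ j, ζ j * w'.2.2 j) := by
                    rw [Finset.mul_sum, Finset.mul_sum, ← Finset.sum_add_distrib]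
                    exact Finset.sum_congr rfl (fun j _ => by ring)
                  simp only []
                  rw [e1, e2]
                  ring
                · simp only [socpConLhs]
                  have e3 : ∑ i, (α i * (a * w.2.1 i + a' * w'.2.1 i)
                      + b i * (a * w.1 i + a' * w'.1 i))
                      = a * (∑ i, (α i * w.2.1 i + b i * w.1 i))
                        + a' * (∑ i, (α i * w'.2.1 i + b i * w'.1 i)) := by
                    rw [Finset.mul_sum, Finset.mul_sum, ← Finset.sum_add_distrib]
                    exact Finset.sum_congr rfl (fun i _ => by ring)
                  have e4 : ∑ j, (a * w.2.2 j + a' * w'.2.2 j)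
                      = a * (∑ j, w.2.2 j) + a' * (∑ j, w'.2.2 j) := by
                    rw [Finset.mul_sum, Finset.mul_sum, ← Finset.sum_add_distrib]
                  rw [e3, e4]
                  ring)
              (-c₁) (r - c₀)
              (by
                intro w hw hGc
                have hGc' : -(socpConLhs α b w.1 w.2.1 w.2.2) = -c₁ := hGc
                have hGeq : socpConLhs α b w.1 w.2.1 w.2.2 = c₁ := by linarith
                exact (hrF w.1 w.2.1 w.2.2 hw (le_of_eq hGeq.symm) (by rw [hGeq]; exact hc₁₂)).le)
              (by
                obtain ⟨x₁, y₁, z₁, hf₁, hg₁⟩ := hSR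
                exact ⟨(x₁, y₁, z₁), hf₁, by simpa using neg_lt_neg hg₁⟩)
              (⟨(xm, ym, zm), hfm, by simpa using neg_lt_neg hgm, hFm⟩)
            have HP : ∀ (x y : Fin l → ℝ) (z : Fin k → ℝ), (∀ i, (1/2) * x i ^ 2 ≤ y i) →
                (r - c₀) + (-s) * c₁ ≤ (∑ i, ((-s * α i + δ i) * y i + (-s * b i + e i) * x i))
                  + ∑ j, (ζ j + -s) * z j := by
              intro x y z hf
              have hthis : (r - c₀) + s * (-c₁) ≤
                  ((∑ i, (δ i * y i + e i * x i)) + ∑ j, ζ j * z j) +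
                    s * (-(socpConLhs α b x y z)) := hHP (x, y, z) hf
              simp only [socpConLhs] at hthis
              rw [sum_split l δ e α b x y (-s), zsum_split k ζ z (-s)]
              linarith
            have := finneg δ e α b ζ c₀ c₁ c₂ (-s) (r - c₀) (neg_nonpos.2 hs0) HP
            rw [hrr] at this
            exact absurd this (not_le.2 hr1)
        · -- right failure: positive multiplier
          push_neg at hRH
          obtain ⟨x₀, y₀, z₀, hf₀, hg₀, hF₀⟩ := hRH
          obtain ⟨s, hs0, hHP⟩ := slater_aux
            (fun w : (Fin l → ℝ) × (Fin l → ℝ) × (Fin k → ℝ) =>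
              ∀ i, (1/2) * w.1 i ^ 2 ≤ w.2.1 i)
            (fun w => (∑ i, (δ i * w.2.1 i + e i * w.1 i)) + ∑ j, ζ j * w.2.2 j)
            (fun w => socpConLhs α b w.1 w.2.1 w.2.2)
            (by
              intro w w' a a' hw hw' ha ha' hab
              refine ⟨(fun i => a * w.1 i + a' * w'.1 i,
                fun i => a * w.2.1 i + a' * w'.2.1 i,
                fun j => a * w.2.2 j + a' * w'.2.2 j), ?_, ?_, ?_⟩
              · intro i
                have h1 := hw i
                have h2 := hw' i
                have h3 : a' = 1 - a := by linarith
                subst h3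
                nlinarith [mul_le_mul_of_nonneg_left h1 ha,
                  mul_le_mul_of_nonneg_left h2 ha',
                  mul_nonneg (mul_nonneg ha ha') (sq_nonneg (w.1 i - w'.1 i))]
              · have e1 : ∑ i, (δ i * (a * w.2.1 i + a' * w'.2.1 i)
                    + e i * (a * w.1 i + a' * w'.1 i))
                    = a * (∑ i, (δ i * w.2.1 i + e i * w.1 i))
                      + a' * (∑ i, (δ i * w'.2.1 i + e i * w'.1 i)) := by
                  rw [Finset.mul_sum, Finset.mul_sum, ← Finset.sum_add_distrib]
                  exact Finset.sum_congr rfl (fun i _ => by ring)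
                have e2 : ∑ j, ζ j * (a * w.2.2 j + a' * w'.2.2 j)
                    = a * (∑ j, ζ j * w.2.2 j) + a' * (∑ j, ζ j * w'.2.2 j) := by
                  rw [Finset.mul_sum, Finset.mul_sum, ← Finset.sum_add_distrib]
                  exact Finset.sum_congr rfl (fun j _ => by ring)
                simp only []
                rw [e1, e2]
                ring
              · simp only [socpConLhs]
                have e3 : ∑ i, (α i * (a * w.2.1 i + a' * w'.2.1 i)
                    + b i * (a * w.1 i + a' * w'.1 i))
                    = a * (∑ i, (α i * w.2.1 i + b i * w.1 i))
                      + a' * (∑ i, (α i * w'.2.1 i + b i * w'.1 i)) := by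
                  rw [Finset.mul_sum, Finset.mul_sum, ← Finset.sum_add_distrib]
                  exact Finset.sum_congr rfl (fun i _ => by ring)
                have e4 : ∑ j, (a * w.2.2 j + a' * w'.2.2 j)
                    = a * (∑ j, w.2.2 j) + a' * (∑ j, w'.2.2 j) := by
                  rw [Finset.mul_sum, Finset.mul_sum, ← Finset.sum_add_distrib]
                rw [e3, e4]
                ring)
            c₂ (r - c₀)
            (by
              intro w hw hGc
              have hGc' : socpConLhs α b w.1 w.2.1 w.2.2 = c₂ := hGc
              exact (hrF w.1 w.2.1 w.2.2 hw (by rw [hGc']; exact hc₁₂) (le_of_eq hGc')).le)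
            (by
              obtain ⟨x₁, y₁, z₁, hf₁, hg₁⟩ := hSL
              exact ⟨(x₁, y₁, z₁), hf₁, hg₁⟩)
            (⟨(x₀, y₀, z₀), hf₀, hg₀, hF₀⟩)
          have HP : ∀ (x y : Fin l → ℝ) (z : Fin k → ℝ), (∀ i, (1/2) * x i ^ 2 ≤ y i) →
              (r - c₀) + s * c₂ ≤ (∑ i, ((s * α i + δ i) * y i + (s * b i + e i) * x i))
                + ∑ j, (ζ j + s) * z j := by
            intro x y z hf
            have hthis : (r - c₀) + s * c₂ ≤
                ((∑ i, (δ i * y i + e i * x i)) + ∑ j, ζ j * z j) +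
                  s * socpConLhs α b x y z := hHP (x, y, z) hf
            simp only [socpConLhs] at hthis
            rw [sum_split l δ e α b x y s, zsum_split k ζ z s]
            linarith
          have := finpos δ e α b ζ c₀ c₁ c₂ s (r - c₀) hs0 HP
          rw [hrr] at this
          exact absurd this (not_le.2 hr1)
      · -- boundary case: the constraint function is everywhere ≤ c₁
        push_neg at hSR
        have hGle : ∀ x y : Fin l → ℝ, ∀ z : Fin k → ℝ, (∀ i, (1/2) * x i ^ 2 ≤ y i) →
            socpConLhs α b x y z ≤ c₁ := fun x y z hf => hSR x y z hf
        have hk : IsEmpty (Fin k) := by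
          constructor
          intro j₀
          have hf0 : ∀ i : Fin l, (1/2) * (0:ℝ) ^ 2 ≤ (0:ℝ) := by norm_num
          have := hGle 0 0 (fun j => if j = j₀ then c₁ + 1 else 0) (fun i => hf0 i)
          simp only [socpConLhs, Pi.zero_apply, mul_zero, add_zero, Finset.sum_const_zero,
            zero_add] at this
          rw [Finset.sum_ite_eq' Finset.univ j₀ (fun _ => c₁ + 1)] at this
          simp at this
          linarith
        have hzempty : ∀ (f : Fin k → ℝ), ∑ j, f j = 0 := by
          intro f
          rw [Finset.univ_eq_empty, Finset.sum_empty]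
        have hneg : ∀ x y : Fin l → ℝ, ∑ i, ((-α i) * y i + (-b i) * x i)
            = -(∑ i, (α i * y i + b i * x i)) := by
          intro x y
          rw [← Finset.sum_neg_distrib]
          exact Finset.sum_congr rfl (fun i _ => by ring)
        obtain ⟨s, hs0, hB⟩ := bdry δ e (fun i => -α i) (fun i => -b i) (-c₁) (r - c₀)
          (by
            intro x y hf
            have := hGle x y (fun _ => 0) hf
            simp only [socpConLhs, hzempty, add_zero] at this
            rw [hneg x y]
            linarith)
          (by
            obtain ⟨xf, yf, zf, h1, h2, hf⟩ := hfeas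
            refine ⟨xf, yf, hf, ?_⟩
            simp only [socpConLhs, hzempty, add_zero] at h1
            rw [hneg xf yf]
            linarith)
          (by
            intro x y hf hle
            rw [hneg x y] at hle
            have hge : c₁ ≤ ∑ i, (α i * y i + b i * x i) := by linarith
            have hle2 := hGle x y (fun _ => 0) hf
            simp only [socpConLhs, hzempty, add_zero] at hle2
            have := hrF x y (fun _ => 0) hf
              (by simp only [socpConLhs, hzempty, add_zero]; exact hge)
              (by simp only [socpConLhs, hzempty, add_zero]; linarith)
            rw [hzempty (fun j => ζ j * 0), add_zero] at this
            exact this)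
        have HP : ∀ (x y : Fin l → ℝ) (z : Fin k → ℝ), (∀ i, (1/2) * x i ^ 2 ≤ y i) →
            (r - c₀) + (-s) * c₁ ≤ (∑ i, ((-s * α i + δ i) * y i + (-s * b i + e i) * x i))
              + ∑ j, (ζ j + -s) * z j := by
          intro x y z hf
          have hb := hB x y hf
          have he : ∑ i, ((s * (-α i) + δ i) * y i + (s * (-b i) + e i) * x i)
              = ∑ i, ((-s * α i + δ i) * y i + (-s * b i + e i) * x i) :=
            Finset.sum_congr rfl (fun i _ => by ring)
          rw [he] at hb
          rw [hzempty (fun j => (ζ j + -s) * z j), add_zero]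
          linarith
        have := finneg δ e α b ζ c₀ c₁ c₂ (-s) (r - c₀) (neg_nonpos.2 hs0) HP
        rw [hrr] at this
        exact absurd this (not_le.2 hr1)
    · -- boundary case: the constraint function is everywhere ≥ c₂
      push_neg at hSL
      have hGge : ∀ x y : Fin l → ℝ, ∀ z : Fin k → ℝ, (∀ i, (1/2) * x i ^ 2 ≤ y i) →
          c₂ ≤ socpConLhs α b x y z := fun x y z hf => hSL x y z hf
      have hk : IsEmpty (Fin k) := by
        constructor
        intro j₀
        have hf0 : ∀ i : Fin l, (1/2) * (0:ℝ) ^ 2 ≤ (0:ℝ) := by norm_num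
        have := hGge 0 0 (fun j => if j = j₀ then c₂ - 1 else 0) (fun i => hf0 i)
        simp only [socpConLhs, Pi.zero_apply, mul_zero, add_zero, Finset.sum_const_zero,
          zero_add] at this
        rw [Finset.sum_ite_eq' Finset.univ j₀ (fun _ => c₂ - 1)] at this
        simp at this
        linarith
      have hzempty : ∀ (f : Fin k → ℝ), ∑ j, f j = 0 := by
        intro f
        rw [Finset.univ_eq_empty, Finset.sum_empty]
      obtain ⟨s, hs0, hB⟩ := bdry δ e α b c₂ (r - c₀)
        (by
          intro x y hf
          have := hGge x y (fun _ => 0) hf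
          simp only [socpConLhs, hzempty, add_zero] at this
          exact this)
        (by
          obtain ⟨xf, yf, zf, h1, h2, hf⟩ := hfeas
          refine ⟨xf, yf, hf, ?_⟩
          simp only [socpConLhs, hzempty, add_zero] at h2
          exact h2)
        (by
          intro x y hf hle
          have hge := hGge x y (fun _ => 0) hf
          simp only [socpConLhs, hzempty, add_zero] at hge
          have := hrF x y (fun _ => 0) hf
            (by simp only [socpConLhs, hzempty, add_zero]; linarith)
            (by simp only [socpConLhs, hzempty, add_zero]; exact hle)
          rw [hzempty (fun j => ζ j * 0), add_zero] at this
          exact this)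
      have HP : ∀ (x y : Fin l → ℝ) (z : Fin k → ℝ), (∀ i, (1/2) * x i ^ 2 ≤ y i) →
          (r - c₀) + s * c₂ ≤ (∑ i, ((s * α i + δ i) * y i + (s * b i + e i) * x i))
            + ∑ j, (ζ j + s) * z j := by
        intro x y z hf
        have hb := hB x y hf
        rw [hzempty (fun j => (ζ j + s) * z j), add_zero]
        linarith
      have := finpos δ e α b ζ c₀ c₁ c₂ s (r - c₀) hs0 HP
      rw [hrr] at this
      exact absurd this (not_le.2 hr1)
  · -- weak duality direction
    apply sSup_le
    rintro v ⟨ν₁, ν₂, h1, h2, rfl⟩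
    apply le_sInf
    rintro w ⟨x, y, z, hg1, hg2, hfe, rfl⟩
    exact weak_dual_pt δ e α b ζ c₀ c₁ c₂ ν₁ ν₂ h1 h2 x y z hg1 hg2 hfe
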